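/- Let T_i and T_j be bounded normal operators on a complex Hilbert space H and let q be a complex number with |q| = 1 such that T_j T_i = q T_i T_j. Then T_j^* T_i = conj(q) T_i T_j^* and T_j^* T_i^* = q T_i^* T_j^*. -/

import Mathlib

open NormedSpace

section Fuglede

variable {A : Type*} [NormedRing A] [StarRing A] [CStarRing A] [NormedAlgebra ℂ A]
  [CompleteSpace A] [StarModule ℂ A]

lemma exp_semiconj_aux {a b x : A} (h : a * x = x * b) :
    exp a * x = x * exp b := by
  have hs : SemiconjBy x b a := h.symm
  simp only [exp_eq_tsum ℂ]
  rw [← (expSeries_summable' (𝕂 := ℂ) a).tsum_mul_right x,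
      ← (expSeries_summable' (𝕂 := ℂ) b).tsum_mul_left x]
  congr 1
  ext n
  rw [smul_mul_assoc, mul_smul_comm, (hs.pow_right n).eq]

lemma exp_neg_mul_exp_self (a : A) : exp (-a) * exp a = 1 := by
  let +nondep : NormedAlgebra ℚ A := .restrictScalars ℚ ℂ A
  rw [← exp_add_of_commute (Commute.neg_left rfl), neg_add_cancel, exp_zero]

/-- Fuglede–Putnam theorem in a C*-algebra. -/
lemma fuglede_putnam {n m x : A} (hn : n * star n = star n * n)
    (hm : m * star m = star m * m) (h : n * x = x * m) :
    star n * x = x * star m := by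
  let +nondep : NormedAlgebra ℚ A := .restrictScalars ℚ ℂ A
  -- Step 1: exponentiated intertwining
  have h1 : ∀ z : ℂ, exp (z • n) * x = x * exp (z • m) := fun z =>
    exp_semiconj_aux (by rw [smul_mul_assoc, mul_smul_comm, h])
  have h1' : ∀ z : ℂ, x = exp (-(z • n)) * x * exp (z • m) := by
    intro z
    rw [mul_assoc, ← h1 z, ← mul_assoc, exp_neg_mul_exp_self, one_mul]
  -- the entire function
  set f : ℂ → A := fun z => exp (z • star n) * x * exp (-(z • star m)) with hf
  -- skew-adjoint combinations
  have hskew : ∀ (c : A) (z : ℂ),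
      (z • star c - (starRingEnd ℂ z) • c) ∈ skewAdjoint A := by
    intro c z
    simp only [skewAdjoint.mem_iff, star_sub, star_smul, star_star, neg_sub,
      starRingEnd_apply]
  -- rewrite f z with unitaries
  have key : ∀ z : ℂ, f z =
      exp (z • star n - (starRingEnd ℂ z) • n) * x *
        exp ((starRingEnd ℂ z) • m - z • star m) := by
    intro z
    have hcn : Commute (z • star n) (-((starRingEnd ℂ z) • n)) :=
      Commute.neg_right (Commute.smul_left (Commute.smul_right hn.symm _) _)
    have hcm : Commute ((starRingEnd ℂ z) • m) (-(z • star m)) :=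
      Commute.neg_right (Commute.smul_left (Commute.smul_right hm _) _)
    rw [hf]
    conv_lhs => rw [h1' (starRingEnd ℂ z)]
    rw [sub_eq_add_neg, sub_eq_add_neg, exp_add_of_commute hcn, exp_add_of_commute hcm]
    simp only [mul_assoc]
  -- boundedness
  have hbound : ∀ z : ℂ, ‖f z‖ = ‖x‖ := by
    intro z
    have hu1 : exp (z • star n - (starRingEnd ℂ z) • n) ∈ unitary A :=
      exp_mem_unitary_of_mem_skewAdjoint (hskew n z)
    have hu2 : exp ((starRingEnd ℂ z) • m - z • star m) ∈ unitary A := by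
      have : (starRingEnd ℂ z) • m - z • star m = -(z • star m - (starRingEnd ℂ z) • m) := by
        rw [neg_sub]
      rw [this]
      exact exp_mem_unitary_of_mem_skewAdjoint (neg_mem (hskew m z))
    rw [key z, CStarRing.norm_mul_mem_unitary _ hu2, CStarRing.norm_mem_unitary_mul _ hu1]
  -- differentiability
  have hdiff : Differentiable ℂ f := by
    have d1 : Differentiable ℂ (fun z : ℂ => exp (z • star n)) := fun z =>
      (hasDerivAt_exp_smul_const (𝕂 := ℂ) (star n) z).differentiableAt
    have d2 : Differentiable ℂ (fun z : ℂ => exp (-(z • star m))) := by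
      have : ∀ z : ℂ, -(z • star m) = z • (-(star m)) := fun z => (smul_neg z (star m)).symm
      simp only [this]
      exact fun z => (hasDerivAt_exp_smul_const (𝕂 := ℂ) (-(star m)) z).differentiableAt
    exact (d1.mul (differentiable_const x)).mul d2
  -- Liouville
  have hconst : ∀ z : ℂ, f z = f 0 := by
    intro z
    apply hdiff.apply_eq_apply_of_bounded
    apply Bornology.IsBounded.subset (Metric.isBounded_closedBall (x := (0 : A)) (r := ‖x‖))
    rintro - ⟨z, rfl⟩
    simp [Metric.mem_closedBall, hbound z, dist_zero_right, le_refl]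
  have hf0 : f 0 = x := by simp [hf]
  -- deduce exponentiated adjoint intertwining
  have h2 : ∀ z : ℂ, exp (z • star n) * x = x * exp (z • star m) := by
    intro z
    have hx : exp (z • star n) * x * exp (-(z • star m)) = x := (hconst z).trans hf0
    calc exp (z • star n) * x
        = exp (z • star n) * x * exp (-(z • star m)) * exp (z • star m) := by
          rw [mul_assoc, exp_neg_mul_exp_self, mul_one]
      _ = x * exp (z • star m) := by rw [hx]
  -- differentiate at 0
  have hF : HasDerivAt (fun z : ℂ => exp (z • star n) * x) (star n * x) 0 := by
    have := (hasDerivAt_exp_smul_const (𝕂 := ℂ) (star n) (0 : ℂ)).mul_const x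
    simpa using this
  have hG : HasDerivAt (fun z : ℂ => exp (z • star n) * x) (x * star m) 0 := by
    have := (hasDerivAt_exp_smul_const (𝕂 := ℂ) (star m) (0 : ℂ)).const_mul x
    simp only [zero_smul, exp_zero, mul_one, one_mul] at this
    have heq : (fun z : ℂ => x * exp (z • star m)) = fun z : ℂ => exp (z • star n) * x :=
      funext fun z => (h2 z).symm
    rw [heq] at this
    exact this
  exact hF.unique hG

end Fuglede

/-- Fuglede–Putnam type consequence of the `q`-commutation relation for normal operators:
if `T_i, T_j` are bounded normal operators on a complex Hilbert space, `|q| = 1` and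
`T_j T_i = q T_i T_j`, then `T_j^* T_i = conj(q) T_i T_j^*` and
`T_j^* T_i^* = q T_i^* T_j^*`. -/
theorem stmt13 {H : Type*} [NormedAddCommGroup H] [InnerProductSpace ℂ H] [CompleteSpace H]
    (Ti Tj : H →L[ℂ] H) (q : ℂ) (hq : ‖q‖ = 1)
    (hTi : Ti * ContinuousLinearMap.adjoint Ti = ContinuousLinearMap.adjoint Ti * Ti)
    (hTj : Tj * ContinuousLinearMap.adjoint Tj = ContinuousLinearMap.adjoint Tj * Tj)
    (hcomm : Tj * Ti = q • (Ti * Tj)) :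
    ContinuousLinearMap.adjoint Tj * Ti
        = (starRingEnd ℂ q) • (Ti * ContinuousLinearMap.adjoint Tj)
      ∧ ContinuousLinearMap.adjoint Tj * ContinuousLinearMap.adjoint Ti
        = q • (ContinuousLinearMap.adjoint Ti * ContinuousLinearMap.adjoint Tj) := by
  simp only [← ContinuousLinearMap.star_eq_adjoint] at *
  have hq1 : q * star q = 1 := by
    rw [← starRingEnd_apply, Complex.mul_conj]
    norm_cast
    rw [Complex.normSq_eq_norm_sq, hq, one_pow]
  constructor
  · -- Fuglede–Putnam with n = Tj, m = q • Tj, x = Ti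
    have hm : (q • Tj) * star (q • Tj) = star (q • Tj) * (q • Tj) := by
      simp only [star_smul, smul_mul_smul_comm]
      rw [hTj, mul_comm q (star q)]
    have h : Tj * Ti = Ti * (q • Tj) := by rw [mul_smul_comm, hcomm]
    have := fuglede_putnam hTj hm h
    rw [star_smul, mul_smul_comm] at this
    rw [starRingEnd_apply]
    exact this
  · -- take star of hcomm
    have h1 := congrArg star hcomm
    rw [star_mul, star_smul, star_mul] at h1
    -- h1 : star Ti * star Tj = star q • (star Tj * star Ti)
    have h2 := congrArg (fun T => q • T) h1
    simp only [smul_smul, hq1, one_smul] at h2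
    exact h2.symm
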